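/- Let n ≥ 2. There exist, for each q ∈ {0,…,2n} and each j ∈ ℕ, a finite family of pairwise disjoint closed intervals A^q_{j,1}, …, A^q_{j,m_j} ⊆ ℝ, such that, defining the cubes S^q_{j;i_1,…,i_n} = A^q_{j,i_1} × ⋯ × A^q_{j,i_n} and the system 𝒮^q_j = { S^q_{j;i_1,…,i_n} : 1 ≤ i_1,…,i_n ≤ m_j }, the following hold: (i) for every x ∈ [0,1]^n and every j ∈ ℕ, there are at least n+1 values of q ∈ {0,…,2n} such that x belongs to some cube of 𝒮^q_j; (ii) for every q, the supremum over 𝒮^q_j of the diameters of the cubes tends to 0 as j → ∞. -/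
import Mathlib

/-- At most one shift `q` has a large fractional part. -/
lemma kcl_bad_subsingleton (N : ℕ) (u : ℝ) :
    {q : Fin N | 1 - 1/(N:ℝ) < Int.fract (u - (q:ℝ)/(N:ℝ))}.Subsingleton := by
  rcases Nat.eq_zero_or_pos N with h | hN
  · subst h; intro q _; exact q.elim0
  intro q hq q' hq'
  have hNr : (0:ℝ) < N := by exact_mod_cast hN
  simp only [Set.mem_setOf_eq] at hq hq'
  set K : ℤ := ⌊u - (q:ℝ)/N⌋ with hK
  set K' : ℤ := ⌊u - (q':ℝ)/N⌋ with hK'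
  have hfq : Int.fract (u - (q:ℝ)/N) = u - (q:ℝ)/N - K := rfl
  have hfq' : Int.fract (u - (q':ℝ)/N) = u - (q':ℝ)/N - K' := rfl
  have h1 : Int.fract (u - (q:ℝ)/N) < 1 := Int.fract_lt_one _
  have h1' : Int.fract (u - (q':ℝ)/N) < 1 := Int.fract_lt_one _
  set z : ℤ := (((q':ℕ):ℤ) - ((q:ℕ):ℤ)) + N * (K' - K) with hz
  have hzc : (z:ℝ) = N * (Int.fract (u - (q:ℝ)/N) - Int.fract (u - (q':ℝ)/N)) := by
    rw [hfq, hfq']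
    push_cast [hz]
    field_simp
    ring
  have habs : |(z:ℝ)| < 1 := by
    rw [hzc, abs_mul, abs_of_pos hNr]
    have hb : |Int.fract (u - (q:ℝ)/N) - Int.fract (u - (q':ℝ)/N)| < 1/N := by
      rw [abs_lt]
      constructor <;> nlinarith
    calc (N:ℝ) * |Int.fract (u - (q:ℝ)/N) - Int.fract (u - (q':ℝ)/N)|
        < N * (1/N) := by exact mul_lt_mul_of_pos_left hb hNr
      _ = 1 := by field_simp
  have hz0 : z = 0 := by
    have h2 : |z| < 1 := by exact_mod_cast (by rwa [← Int.cast_abs] at habs : ((|z| : ℤ) : ℝ) < 1)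
    exact Int.abs_lt_one_iff.mp h2
  have hqlt : ((q:ℕ):ℤ) < (N:ℤ) := by exact_mod_cast q.isLt
  have hqlt' : ((q':ℕ):ℤ) < (N:ℤ) := by exact_mod_cast q'.isLt
  have hq0 : (0:ℤ) ≤ ((q:ℕ):ℤ) := by positivity
  have hq0' : (0:ℤ) ≤ ((q':ℕ):ℤ) := by positivity
  have hD : ((q':ℕ):ℤ) - ((q:ℕ):ℤ) = (N:ℤ) * (K - K') := by linear_combination hz0
  have habs3 : |((q':ℕ):ℤ) - ((q:ℕ):ℤ)| < (N:ℤ) := abs_lt.mpr ⟨by omega, by omega⟩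
  rw [hD, abs_mul, abs_of_nonneg (by positivity : (0:ℤ) ≤ (N:ℤ))] at habs3
  have hNz : (0:ℤ) < (N:ℤ) := by exact_mod_cast hN
  have hKK' : |K - K'| < 1 := by
    by_contra hcon
    push_neg at hcon
    nlinarith
  have hKe : K = K' := by
    have := abs_lt.mp hKK'
    omega
  have : ((q':ℕ):ℤ) = ((q:ℕ):ℤ) := by rw [hKe] at hD; simp at hD; omega
  exact Fin.ext (by exact_mod_cast this.symm)

/-- Kolmogorov's covering lemma: for each shift `q ∈ {0,…,2n}` and level `j` there is a
finite family of pairwise disjoint closed intervals such that every point of `[0,1]^n`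
lies in a product cube for at least `n+1` of the `2n+1` shifts, and the cube diameters
tend to `0` as `j → ∞`. -/
theorem kolmogorov_covering_lemma (n : ℕ) (hn : 2 ≤ n) :
    ∃ (m : ℕ → ℕ) (A : Fin (2 * n + 1) → (j : ℕ) → Fin (m j) → Set ℝ),
      (∀ q j i, ∃ a b : ℝ, a ≤ b ∧ A q j i = Set.Icc a b) ∧
      (∀ q j, ∀ i i' : Fin (m j), i ≠ i' → Disjoint (A q j i) (A q j i')) ∧
      (∀ x ∈ Set.Icc (0 : Fin n → ℝ) 1, ∀ j : ℕ,
        n + 1 ≤ {q : Fin (2 * n + 1) |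
          ∃ i : Fin n → Fin (m j), ∀ p, x p ∈ A q j (i p)}.ncard) ∧
      (∀ q : Fin (2 * n + 1), ∀ δ : ℝ, 0 < δ → ∃ J : ℕ, ∀ j ≥ J,
        ∀ i : Fin n → Fin (m j),
          Metric.diam {x : Fin n → ℝ | ∀ p, x p ∈ A q j (i p)} ≤ δ) := by
  set N : ℕ := 2 * n + 1 with hNdef
  have hNr : (0:ℝ) < N := by positivity
  set L : ℕ → ℝ := fun j => 1 / ((j:ℝ) + 1) with hL
  have hLpos : ∀ j, 0 < L j := fun j => by positivity
  set w : ℕ → ℝ := fun j => (1 - 1/(N:ℝ)) * L j with hw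
  have hNinv : 1/(N:ℝ) ≤ 1 := by
    rw [div_le_one hNr]; exact_mod_cast Nat.one_le_iff_ne_zero.mpr (by omega)
  have hwpos : ∀ j, 0 ≤ w j := fun j => by
    apply mul_nonneg (by linarith) (le_of_lt (hLpos j))
  set a : Fin N → (j : ℕ) → Fin (j+3) → ℝ :=
    fun q j i => (((i:ℕ):ℝ) - 1 + (q:ℝ)/N) * L j with ha
  refine ⟨fun j => j + 3, fun q j i => Set.Icc (a q j i) (a q j i + w j), ?_, ?_, ?_, ?_⟩
  · intro q j i
    exact ⟨a q j i, a q j i + w j, by linarith [hwpos j], rfl⟩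
  · -- disjointness
    intro q j i i' hne
    have key : ∀ i i' : Fin (j+3), (i:ℕ) < (i':ℕ) →
        Disjoint (Set.Icc (a q j i) (a q j i + w j)) (Set.Icc (a q j i') (a q j i' + w j)) := by
      intro i i' hlt
      have h1 : a q j i + w j < a q j i' := by
        have hc : ((i:ℕ):ℝ) + 1 ≤ ((i':ℕ):ℝ) := by exact_mod_cast hlt
        have hN1 : 0 < 1/(N:ℝ) := by positivity
        have hLj := hLpos j
        simp only [ha, hw]
        nlinarith
      rw [Set.disjoint_left]
      intro y hy hy'
      have := hy.2
      have := hy'.1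
      linarith
    rcases Nat.lt_or_ge (i:ℕ) (i':ℕ) with h | h
    · exact key i i' h
    · have hlt : (i':ℕ) < (i:ℕ) := lt_of_le_of_ne h (fun he => hne (Fin.ext he.symm))
      exact (key i' i hlt).symm
  · -- covering
    intro x hx j
    have hx0 : ∀ p, 0 ≤ x p := fun p => hx.1 p
    have hx1 : ∀ p, x p ≤ 1 := fun p => hx.2 p
    have hprod : L j * ((j:ℝ)+1) = 1 := by simp only [hL]; field_simp
    have hLj := hLpos j
    have cover : ∀ (t : ℝ), 0 ≤ t → t ≤ 1 → ∀ q : Fin N,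
        Int.fract (t * ((j:ℝ)+1) - (q:ℝ)/N) ≤ 1 - 1/(N:ℝ) →
        ∃ i : Fin (j+3), t ∈ Set.Icc (a q j i) (a q j i + w j) := by
      intro t ht0 ht1 q hfr
      set u : ℝ := t * ((j:ℝ)+1) - (q:ℝ)/N with hu
      have hqN : (q:ℝ)/N < 1 := by
        rw [div_lt_one hNr]; exact_mod_cast q.isLt
      have hqN0 : 0 ≤ (q:ℝ)/N := by positivity
      have hum : -1 < u := by
        have : 0 ≤ t * ((j:ℝ)+1) := by positivity
        simp only [hu]; linarith
      have huM : u ≤ (j:ℝ) + 1 := by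
        have : t * ((j:ℝ)+1) ≤ (j:ℝ)+1 := by nlinarith
        simp only [hu]; linarith
      set k : ℤ := ⌊u⌋ with hk
      have hkm : -1 ≤ k := Int.le_floor.mpr (by exact_mod_cast hum.le)
      have hkM : k ≤ (j:ℤ) + 1 := by
        have h1 : (k:ℝ) ≤ u := Int.floor_le u
        have h2 : (k:ℝ) ≤ (j:ℝ) + 1 := le_trans h1 huM
        exact_mod_cast h2
      refine ⟨⟨(k+1).toNat, by omega⟩, ?_⟩
      have hival : (((k+1).toNat : ℕ) : ℝ) = (k:ℝ) + 1 := by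
        have h3 : ((k+1).toNat : ℤ) = k + 1 := by omega
        exact_mod_cast h3
      have hav : a q j ⟨(k+1).toNat, by omega⟩ = ((k:ℝ) + (q:ℝ)/N) * L j := by
        simp only [ha, hival]; ring_nf
      have hfl : (k:ℝ) ≤ u := Int.floor_le u
      have hfr2 : u - (k:ℝ) ≤ 1 - 1/(N:ℝ) := by
        have h4 : Int.fract u = u - (k:ℝ) := rfl
        rw [← h4]; exact hfr
      have hcancel : (t * ((j:ℝ)+1)) * L j = t := by
        rw [mul_assoc, mul_comm ((j:ℝ)+1) (L j), hprod, mul_one]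
      constructor
      · rw [hav]
        have h3 : (k:ℝ) + (q:ℝ)/N ≤ t * ((j:ℝ)+1) := by simp only [hu] at hfl; linarith
        have h4 := mul_le_mul_of_nonneg_right h3 hLj.le
        rw [hcancel] at h4
        exact h4
      · have hwj : w j = (1 - 1/(N:ℝ)) * L j := rfl
        rw [hav, hwj]
        have h3 : t * ((j:ℝ)+1) ≤ ((k:ℝ) + (q:ℝ)/N) + (1 - 1/(N:ℝ)) := by
          simp only [hu] at hfr2; linarith
        have h4 := mul_le_mul_of_nonneg_right h3 hLj.le
        rw [hcancel] at h4
        linarith [h4, (by ring : (((k:ℝ) + (q:ℝ)/N) + (1 - 1/(N:ℝ))) * L j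
          = ((k:ℝ) + (q:ℝ)/N) * L j + (1 - 1/(N:ℝ)) * L j)]
    -- bad sets
    set bad : Fin n → Set (Fin N) :=
      fun p => {q : Fin N | 1 - 1/(N:ℝ) < Int.fract (x p * ((j:ℝ)+1) - (q:ℝ)/N)} with hbad
    have hbadss : ∀ p, (bad p).Subsingleton := fun p => kcl_bad_subsingleton N _
    set S : Set (Fin N) := {q : Fin N |
        ∃ i : Fin n → Fin (j+3), ∀ p, x p ∈ Set.Icc (a q j (i p)) (a q j (i p) + w j)} with hS
    have hcompl : Sᶜ ⊆ ⋃ p, bad p := by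
      intro q hq
      by_contra hnot
      simp only [Set.mem_iUnion, not_exists] at hnot
      apply hq
      have hall : ∀ p, ∃ i : Fin (j+3), x p ∈ Set.Icc (a q j i) (a q j i + w j) := by
        intro p
        have h1 : ¬ (1 - 1/(N:ℝ) < Int.fract (x p * ((j:ℝ)+1) - (q:ℝ)/N)) := hnot p
        exact cover (x p) (hx0 p) (hx1 p) q (not_lt.mp h1)
      exact ⟨fun p => (hall p).choose, fun p => (hall p).choose_spec⟩
    have hNe : Nonempty (Fin N) := ⟨⟨0, by omega⟩⟩
    classical
    set g : Fin n → Fin N := fun p =>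
      if h : (bad p).Nonempty then h.choose else Classical.arbitrary _ with hg
    have hrange : (⋃ p, bad p) ⊆ Set.range g := by
      intro q hq
      rw [Set.mem_iUnion] at hq
      obtain ⟨p, hp⟩ := hq
      refine ⟨p, ?_⟩
      have hne : (bad p).Nonempty := ⟨q, hp⟩
      simp only [hg, dif_pos hne]
      exact (hbadss p hne.choose_spec hp)
    have hcard1 : Sᶜ.ncard ≤ n := by
      have h1 : Sᶜ.ncard ≤ (Set.range g).ncard :=
        Set.ncard_le_ncard (subset_trans hcompl hrange) (Set.toFinite _)
      have h2 : (Set.range g).ncard ≤ n := by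
        rw [← Set.image_univ]
        calc (g '' Set.univ).ncard ≤ (Set.univ : Set (Fin n)).ncard :=
              Set.ncard_image_le (Set.toFinite _)
          _ = n := by rw [Set.ncard_univ]; simp
      exact le_trans h1 h2
    have htot : S.ncard + Sᶜ.ncard = N := by
      rw [Set.ncard_add_ncard_compl]; simp [hNdef]
    omega
  · -- diameters
    intro q δ hδ
    obtain ⟨J, hJ⟩ := exists_nat_one_div_lt hδ
    refine ⟨J, fun j hj i => ?_⟩
    apply Metric.diam_le_of_forall_dist_le (le_of_lt hδ)
    intro y hy z hz
    simp only [Set.mem_setOf_eq] at hy hz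
    have hstep : dist y z ≤ w j := by
      rw [dist_pi_le_iff (hwpos j)]
      intro p
      have h5 := Real.dist_le_of_mem_Icc (hy p) (hz p)
      simpa using h5
    have hwle : w j ≤ δ := by
      have h1 : L j ≤ 1/((J:ℝ)+1) := by
        simp only [hL]
        apply div_le_div_of_nonneg_left one_pos.le (by positivity)
        exact_mod_cast by omega
      have h2 : w j ≤ L j := by
        have := hLpos j
        simp only [hw]
        nlinarith [(by positivity : (0:ℝ) < 1/(N:ℝ))]
      linarith [hJ.le]
    linarith
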